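/- arXiv:2303.01414 — 4 statements merged into one kernel-verified Lean document; each statement's English description precedes it below -/
import Mathlib

section
/- Let ρ ∈ (0, 1/4] and let t : ℕ → ℝ≥0 be a processing-time function of a job on k machines such that the work w(k) = k·t(k) is non-decreasing in k. Then for any k with 1/ρ ≤ k, t(⌊(1-ρ)k⌋) ≤ (1+4ρ)·t(k). -/
theorem stmt_2 (ρ : ℝ) (hρ0 : 0 < ρ) (hρ4 : ρ ≤ 1/4)
    (t : ℕ → ℝ) (ht : ∀ k, 0 ≤ t k)
    (hmono : ∀ k k' : ℕ, k ≤ k' → (k : ℝ) * t k ≤ (k' : ℝ) * t k')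
    (k : ℕ) (hk : 1/ρ ≤ (k : ℝ)) :
    t (⌊(1 - ρ) * (k : ℝ)⌋.toNat) ≤ (1 + 4*ρ) * t k := by
  set m : ℕ := ⌊(1 - ρ) * (k : ℝ)⌋.toNat with hm
  have hk4 : (4 : ℝ) ≤ (k : ℝ) := by
    calc (4 : ℝ) ≤ 1/ρ := by
          rw [le_div_iff₀ hρ0]; linarith
      _ ≤ k := hk
  have hfloor_pos : (0:ℝ) ≤ (1 - ρ) * k := by nlinarith
  have hm_cast : (m : ℝ) = (⌊(1 - ρ) * (k : ℝ)⌋ : ℝ) := by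
    exact_mod_cast congrArg (Int.cast : ℤ → ℝ) (Int.toNat_of_nonneg (Int.floor_nonneg.mpr hfloor_pos))
  have hml : (1 - ρ) * k - 1 ≤ (m : ℝ) := by
    rw [hm_cast]; linarith [Int.sub_one_lt_floor ((1 - ρ) * (k:ℝ))]
  have hmu : (m : ℝ) ≤ (1 - ρ) * k := by
    rw [hm_cast]; exact Int.floor_le _
  have hmk : m ≤ k := by
    have : (m : ℝ) ≤ (k : ℝ) := le_trans hmu (by nlinarith)
    exact_mod_cast this
  have hρk : 1 ≤ ρ * k := by
    rw [div_le_iff₀ hρ0] at hk; linarith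
  have hmpos : (0:ℝ) < m := by nlinarith
  have hkey : (k : ℝ) ≤ (1 + 4*ρ) * m := by nlinarith
  have h1 : (m : ℝ) * t m ≤ (k : ℝ) * t k := hmono m k hmk
  have h2 : (k : ℝ) * t k ≤ (1 + 4*ρ) * m * t k := by
    have := ht k; nlinarith
  have := le_trans h1 h2
  have : (m : ℝ) * t m ≤ (m : ℝ) * ((1 + 4*ρ) * t k) := by linarith [this]
  exact le_of_mul_le_mul_left (by linarith) hmpos
end

section
/- For every natural number m ≥ 1 and every k ∈ {1,...,m}, with ρ ∈ (0,1/4] and b = 1/ρ, there exists s ∈ S_ρ with s ≤ k and k - s ≤ ρ·k, where S_ρ = {1,...,⌊b⌋} ∪ { ⌊(1+ρ)^i · b⌋ : 1 ≤ i ≤ ⌈log_{1+ρ}(m/b)⌉ } (interpreting the second set as empty if m < b). -/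
open Finset in
theorem stmt_5 (ρ : ℝ) (hρ0 : 0 < ρ) (hρ4 : ρ ≤ 1/4) (b : ℝ) (hb : b = 1/ρ)
    (m : ℕ) (hm : 1 ≤ m) (k : ℕ) (hk1 : 1 ≤ k) (hkm : k ≤ m) :
    ∃ s ∈ Finset.Icc 1 ⌊b⌋₊ ∪
        (Finset.Icc 1 ⌈Real.logb (1 + ρ) ((m : ℝ) / b)⌉₊).image
          (fun i => ⌊(1 + ρ : ℝ)^i * b⌋₊),
      s ≤ k ∧ (k : ℝ) - (s : ℝ) ≤ ρ * k := by
  classical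
  have hb0 : 0 < b := by rw [hb]; positivity
  have hρb : ρ * b = 1 := by rw [hb]; field_simp
  have hb4 : 4 ≤ b := by
    rw [hb, le_div_iff₀ hρ0]; nlinarith
  by_cases hcase : k ≤ ⌊b⌋₊
  · refine ⟨k, ?_, le_refl k, ?_⟩
    · exact Finset.mem_union_left _ (Finset.mem_Icc.mpr ⟨hk1, hcase⟩)
    · have : (0:ℝ) ≤ ρ * k := by positivity
      linarith
  push_neg at hcase
  have hkb : b < (k : ℝ) := by
    have h1 : (⌊b⌋₊ : ℝ) + 1 ≤ (k : ℝ) := by exact_mod_cast hcase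
    have := Nat.lt_floor_add_one b
    linarith
  have hρk : 1 < ρ * (k : ℝ) := by nlinarith
  have hρm : 1 < ρ * (m : ℝ) := by
    have : (k : ℝ) ≤ m := by exact_mod_cast hkm
    nlinarith
  set P : ℕ → Prop := fun j => ⌊(1 + ρ : ℝ) ^ j * b⌋₊ ≤ k with hPdef
  have hgrow : ∀ j : ℕ, (j : ℝ) ≤ (1 + ρ) ^ j * b := by
    intro j
    have h1 : 1 + (j : ℝ) * ρ ≤ (1 + ρ) ^ j := by
      have := one_add_mul_le_pow (by linarith : (-2 : ℝ) ≤ ρ) j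
      linarith
    nlinarith [mul_nonneg (Nat.cast_nonneg j : (0:ℝ) ≤ j) hρ0.le]
  have hP0 : P 0 := by
    simp only [hPdef, pow_zero, one_mul]
    exact hcase.le
  have hnotPk1 : ¬ P (k + 1) := by
    simp only [hPdef, not_le]
    have h1 : ((k : ℝ) + 1) ≤ (1 + ρ) ^ (k + 1) * b := by
      have := hgrow (k + 1); push_cast at this ⊢; linarith
    have : k + 1 ≤ ⌊(1 + ρ : ℝ) ^ (k + 1) * b⌋₊ := Nat.le_floor (by push_cast; linarith)
    omega
  set i : ℕ := Nat.findGreatest P (k + 1) with hidef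
  have hile : i ≤ k + 1 := Nat.findGreatest_le _
  have hPi : P i := Nat.findGreatest_spec (Nat.zero_le _) hP0
  have hik : i ≤ k := by
    by_contra h
    push_neg at h
    have hik1 : i = k + 1 := by omega
    exact hnotPk1 (hik1 ▸ hPi)
  have hnotPi1 : ¬ P (i + 1) := Nat.findGreatest_is_greatest (Nat.lt_succ_self i) (by omega)
  set A : ℝ := (1 + ρ) ^ i * b with hAdef
  have hA0 : 0 < A := by positivity
  have hsk : ⌊A⌋₊ ≤ k := hPi
  have hAk1 : (k : ℝ) + 1 ≤ (1 + ρ) * A := by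
    have h1 : k + 1 ≤ ⌊(1 + ρ : ℝ) ^ (i + 1) * b⌋₊ := by
      simp only [hPdef, not_le] at hnotPi1; omega
    have h2 : ((k : ℝ) + 1) ≤ (1 + ρ) ^ (i + 1) * b := by
      have hfl := Nat.floor_le (by positivity : (0:ℝ) ≤ (1 + ρ : ℝ) ^ (i + 1) * b)
      have hc : ((k + 1 : ℕ) : ℝ) ≤ (⌊(1 + ρ : ℝ) ^ (i + 1) * b⌋₊ : ℝ) := by exact_mod_cast h1
      push_cast at hc; linarith
    calc ((k : ℝ) + 1) ≤ (1 + ρ) ^ (i + 1) * b := h2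
      _ = (1 + ρ) * A := by rw [hAdef, pow_succ]; ring
  have hfloorA : A < (⌊A⌋₊ : ℝ) + 1 := Nat.lt_floor_add_one A
  refine ⟨⌊A⌋₊, ?_, hsk, ?_⟩
  · by_cases hi0 : i = 0
    · apply Finset.mem_union_left
      rw [Finset.mem_Icc]
      have hA_eq : A = b := by rw [hAdef, hi0, pow_zero, one_mul]
      constructor
      · exact Nat.le_floor (by rw [hA_eq]; push_cast; linarith)
      · rw [hA_eq]
    · apply Finset.mem_union_right
      rw [Finset.mem_image]
      refine ⟨i, ?_, rfl⟩
      rw [Finset.mem_Icc]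
      refine ⟨by omega, ?_⟩
      obtain ⟨j, hij⟩ : ∃ j, i = j + 1 := ⟨i - 1, by omega⟩
      have hAm : A < (m : ℝ) + 1 := by
        have h1 : (⌊A⌋₊ : ℝ) ≤ (m : ℝ) := by exact_mod_cast hsk.trans hkm
        linarith
      have hexp : (1 + ρ) * ((1 + ρ) ^ j * b) < (m : ℝ) + 1 := by
        have hA2 : A = (1 + ρ) * ((1 + ρ) ^ j * b) := by rw [hAdef, hij, pow_succ]; ring
        rw [hA2] at hAm; exact hAm
      have hpow : (1 + ρ : ℝ) ^ (j : ℝ) < (m : ℝ) / b := by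
        rw [Real.rpow_natCast, lt_div_iff₀ hb0]
        nlinarith [pow_pos (by linarith : (0:ℝ) < 1 + ρ) j, hexp, hρm]
      have hj : (j : ℝ) < Real.logb (1 + ρ) ((m : ℝ) / b) :=
        (Real.lt_logb_iff_rpow_lt (by linarith) (by positivity)).mpr hpow
      have hlt : j < ⌈Real.logb (1 + ρ) ((m : ℝ) / b)⌉₊ := Nat.lt_ceil.mpr hj
      omega
  · nlinarith [hAk1, hfloorA, hρk, hρ0, (Nat.cast_nonneg k : (0:ℝ) ≤ (k:ℝ)),
      (Nat.cast_nonneg ⌊A⌋₊ : (0:ℝ) ≤ (⌊A⌋₊ : ℝ))]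
end

section
/- Let t : ℕ → ℝ≥0 be non-increasing with monotone work (k ≤ k' implies k·t(k) ≤ k'·t(k')), let s > 0 and let ρ ∈ (0,1/4]. Let S ⊆ ℕ be a set of sizes with the property that for every k ≥ 1 there exists s' ∈ S with s' ≤ k and k - s' ≤ ρk. Define γ(s) = min{k : t(k) ≤ s} (assumed to exist) and γ'(s) = max{k ∈ S : k ≤ γ(s)}. If γ'(s) ≥ 1/ρ, then t(γ'(s)) ≥ s/(1+4ρ). -/
theorem stmt_12 (t : ℕ → ℝ) (ht : ∀ k, 0 ≤ t k)
    (hdec : ∀ k k' : ℕ, k ≤ k' → t k' ≤ t k)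
    (hwork : ∀ k k' : ℕ, k ≤ k' → (k : ℝ) * t k ≤ (k' : ℝ) * t k')
    (s ρ : ℝ) (hs : 0 < s) (hρ0 : 0 < ρ) (hρ4 : ρ ≤ 1/4)
    (S : Set ℕ)
    (hS : ∀ k : ℕ, 1 ≤ k → ∃ s' ∈ S, s' ≤ k ∧ (k : ℝ) - (s' : ℝ) ≤ ρ * k)
    (hcomp : ∀ k : ℕ, 1/ρ ≤ (k : ℝ) → t (⌊(1 - ρ) * (k : ℝ)⌋.toNat) ≤ (1 + 4*ρ) * t k)
    (γ γ' : ℕ)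
    (hγle : t γ ≤ s) (hγmin : ∀ k : ℕ, t k ≤ s → γ ≤ k)
    (hγ'S : γ' ∈ S) (hγ'le : γ' ≤ γ) (hγ'max : ∀ k ∈ S, k ≤ γ → k ≤ γ')
    (hwide : 1/ρ ≤ (γ' : ℝ)) :
    s / (1 + 4*ρ) ≤ t γ' := by
  by_contra h
  push_neg at h
  have h14 : (0:ℝ) < 1 + 4*ρ := by linarith
  have h2 : (1 + 4*ρ) * t γ' < s := by
    rw [lt_div_iff₀ h14] at h; nlinarith
  have h3 : t (⌊(1 - ρ) * (γ' : ℝ)⌋.toNat) < s :=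
    lt_of_le_of_lt (hcomp γ' hwide) h2
  have h4 : γ ≤ ⌊(1 - ρ) * (γ' : ℝ)⌋.toNat := hγmin _ h3.le
  -- show ⌊(1-ρ)γ'⌋.toNat < γ'
  have hργ : (1:ℝ) ≤ ρ * γ' := by
    rw [div_le_iff₀ hρ0] at hwide; linarith [mul_comm ρ (γ':ℝ)]
  have h5 : (1 - ρ) * (γ' : ℝ) ≤ (γ' : ℝ) - 1 := by ring_nf; nlinarith
  have h6 : (⌊(1 - ρ) * (γ' : ℝ)⌋ : ℝ) ≤ (γ' : ℝ) - 1 :=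
    le_trans (Int.floor_le _) h5
  have h7 : ⌊(1 - ρ) * (γ' : ℝ)⌋ ≤ (γ' : ℤ) - 1 := by exact_mod_cast h6
  have hγ'1R : (1:ℝ) ≤ (γ' : ℝ) := by nlinarith [Nat.cast_nonneg (α := ℝ) γ']
  have hγ'1 : 1 ≤ γ' := by exact_mod_cast hγ'1R
  have h8 : ⌊(1 - ρ) * (γ' : ℝ)⌋.toNat < γ' := by omega
  omega
end

section
/- Let a = (a_i)_{0≤i<n} and b = (b_i)_{0≤i<n} be real sequences, and define their (max,+)-convolution c by c_i = max_{0≤j≤i} (a_j + b_{i-j}). If b is concave (b_{i+1} - b_i ≥ b_{i+2} - b_{i+1} for all valid i) and a is arbitrary, and if for index i the maximum is attained at j*, then for index i+1 the maximum over j of a_j + b_{i+1-j} is attained at some j ≥ j*. (Monotonicity of maximizers in (max,+)-convolution with a concave sequence.) -/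
theorem stmt_16 (n : ℕ) (a b : ℕ → ℝ)
    (hconc : ∀ i : ℕ, i + 2 < n → b (i + 2) - b (i + 1) ≤ b (i + 1) - b i)
    (i : ℕ) (hi : i + 1 < n)
    (jstar : ℕ) (hjstar : jstar ≤ i)
    (hmax : ∀ j : ℕ, j ≤ i → a j + b (i - j) ≤ a jstar + b (i - jstar)) :
    ∀ j : ℕ, j < jstar → a j + b (i + 1 - j) ≤ a jstar + b (i + 1 - jstar) := by
  have key : ∀ m : ℕ, m + 1 < n → ∀ k : ℕ, k ≤ m →
      b (m + 1) - b m ≤ b (k + 1) - b k := by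
    intro m
    induction m with
    | zero => intro _ k hk; interval_cases k; exact le_refl _
    | succ m ih =>
      intro hm k hk
      rcases Nat.lt_or_ge k (m + 1) with h | h
      · have h1 := hconc m hm
        have h2 := ih (by omega) k (by omega)
        linarith
      · have : k = m + 1 := by omega
        subst this; rfl
  intro j hj
  have hji : j ≤ i := by omega
  have h1 := hmax j hji
  have e1 : i + 1 - j = (i - j) + 1 := by omega
  have e2 : i + 1 - jstar = (i - jstar) + 1 := by omega
  rw [e1, e2]
  have h2 : b ((i - j) + 1) - b (i - j) ≤ b ((i - jstar) + 1) - b (i - jstar) :=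
    key (i - j) (by omega) (i - jstar) (by omega)
  linarith
end
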